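/- Let d ≥ 3 be an integer and λ > 0, and define Φ_λ(a,b) = (1/2)log(1 + λ a^d) + (1/2)log(1 + λ b^d) − (d/2)log(a + b − ab) for a, b ∈ (0,1). If b = 1/(1 + λ a^{d-1}), then the partial derivative of Φ_λ(a,b) with respect to a (with b held fixed) vanishes. -/

import Mathlib

open Set

/-- The bipartite hard-core Bethe free energy functional. -/
noncomputable def hcPhi (d : ℕ) (lam a b : ℝ) : ℝ :=
  (1/2) * Real.log (1 + lam * a ^ d) + (1/2) * Real.log (1 + lam * b ^ d)
    - ((d:ℝ)/2) * Real.log (a + b - a * b)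

theorem stmt7 (d : ℕ) (hd : 3 ≤ d) (lam : ℝ) (hlam : 0 < lam)
    (a b : ℝ) (ha : a ∈ Ioo (0:ℝ) 1) (hb : b ∈ Ioo (0:ℝ) 1)
    (hfix : b = 1 / (1 + lam * a ^ (d - 1))) :
    HasDerivAt (fun x => hcPhi d lam x b) 0 a := by
  obtain ⟨ha0, ha1⟩ := ha
  obtain ⟨hb0, hb1⟩ := hb
  have hA : 0 < 1 + lam * a ^ d := by positivity
  have hB : 0 < a + b - a * b := by nlinarith
  have hP : 0 < 1 + lam * a ^ (d - 1) := by positivity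
  have h1 : HasDerivAt (fun x : ℝ => (1/2 : ℝ) * Real.log (1 + lam * x ^ d))
      ((1/2) * (lam * ((d : ℝ) * a ^ (d - 1)) / (1 + lam * a ^ d))) a := by
    exact ((((hasDerivAt_pow d a).const_mul lam).const_add 1).log hA.ne').const_mul _
  have h2 : HasDerivAt (fun _ : ℝ => (1/2 : ℝ) * Real.log (1 + lam * b ^ d)) 0 a :=
    hasDerivAt_const _ _
  have h3 : HasDerivAt (fun x : ℝ => x + b - x * b) (1 - b) a := by
    have := ((hasDerivAt_id a).add_const b).sub ((hasDerivAt_id a).mul_const b)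
    simp only [one_mul, id_eq] at this
    exact this
  have h4 : HasDerivAt (fun x : ℝ => ((d : ℝ)/2) * Real.log (x + b - x * b))
      (((d : ℝ)/2) * ((1 - b) / (a + b - a * b))) a :=
    (h3.log hB.ne').const_mul _
  have h := (h1.add h2).sub h4
  have hval : (1/2) * (lam * ((d : ℝ) * a ^ (d - 1)) / (1 + lam * a ^ d)) + 0
      - ((d : ℝ)/2) * ((1 - b) / (a + b - a * b)) = 0 := by
    have hpow : a ^ d = a ^ (d - 1) * a := by
      rw [← pow_succ]
      congr 1
      omega
    subst hfix
    rw [hpow] at hA ⊢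
    have hBne := hB.ne'
    field_simp [hP.ne', hA.ne'] at hBne ⊢
    have key : (2 + lam * a * a ^ (d - 1) * 2) ≠ 0 := by positivity
    have key2 : (1 + lam * a * a ^ (d - 1)) ≠ 0 := by positivity
    field_simp [key, key2]
    ring_nf
    field_simp [key2]
    ring
  rw [hval] at h
  exact h
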